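/- Let L be a finite semilattice with a zero element θ, equipped with its canonical partial order. For t ∈ L define ρ_t ∈ ℂ[L] by ρ_θ = e_θ and ρ_t = Π_{x ≺ t} (e_t − e_x) for t ≠ θ (product in the semigroup algebra). Then the Schützenberger representation Γ satisfies Γ(ρ_t) = δ_t for every t ∈ L. -/
import Mathlib


open Finset Classical

/-- Convolution product on the semigroup algebra `ℂ[L]` of a finite semigroup. -/
noncomputable def semigroupConv {L : Type*} [Mul L] [Fintype L] (a b : L → ℂ) : L → ℂ :=
  fun z => ∑ p : L × L, if p.1 * p.2 = z then a p.1 * b p.2 else 0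

/-- The Schützenberger representation on the semigroup algebra of a finite
semilattice: `Γ(e_t)` is the indicator of the down-set `↓t = {s : s * t = s}`. -/
noncomputable def schutzRep {L : Type*} [Mul L] [Fintype L] (a : L → ℂ) : L → ℂ :=
  fun x => ∑ t : L, if x * t = x then a t else 0

/-- The element `ρ_t = Π_{x ≺ t} (e_t − e_x)` of `ℂ[L]` (with `ρ_θ = e_θ`),
realised as an iterated convolution product; since `e_t` is an identity for all
the factors, the fold below with initial value `e_t` computes exactly this
product, and gives `e_θ` when `t = θ` since then no `x ≺ t` exists. -/
noncomputable def rho {L : Type*} [Mul L] [Fintype L] (t : L) : L → ℂ :=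
  ((Finset.univ.filter (fun x : L => x * t = x ∧ x ≠ t)).toList).foldr
    (fun x acc => semigroupConv ((Pi.single t 1 : L → ℂ) - Pi.single x 1) acc)
    (Pi.single t 1)

lemma schutzRep_conv {L : Type*} [CommSemigroup L] [Fintype L]
    (hidem : ∀ s : L, s * s = s) (a b : L → ℂ) (x : L) :
    schutzRep (semigroupConv a b) x = schutzRep a x * schutzRep b x := by
  classical
  have key : ∀ p q : L, x * (p * q) = x ↔ (x * p = x ∧ x * q = x) := by
    intro p q
    constructor
    · intro h
      have hpq : (p * q) * p = p * q := by
        rw [mul_comm p q, mul_assoc, hidem p, mul_comm q p]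
      have hq' : (p * q) * q = p * q := by rw [mul_assoc, hidem q]
      constructor
      · calc x * p = x * (p * q) * p := by rw [h]
          _ = x * ((p * q) * p) := by rw [mul_assoc]
          _ = x * (p * q) := by rw [hpq]
          _ = x := h
      · calc x * q = x * (p * q) * q := by rw [h]
          _ = x * ((p * q) * q) := by rw [mul_assoc]
          _ = x * (p * q) := by rw [hq']
          _ = x := h
    · rintro ⟨h1, h2⟩
      rw [← mul_assoc, h1, h2]
  simp only [schutzRep, semigroupConv]
  rw [Finset.sum_mul_sum]
  calc (∑ u : L, if x * u = x then (∑ p : L × L, if p.1 * p.2 = u then a p.1 * b p.2 else 0) else 0)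
      = ∑ u : L, ∑ p : L × L, if p.1 * p.2 = u then (if x * u = x then a p.1 * b p.2 else 0) else 0 := by
        refine Finset.sum_congr rfl fun u _ => ?_
        split_ifs with h
        · refine Finset.sum_congr rfl fun p _ => ?_
          split_ifs <;> simp [h]
        · simp [h]
    _ = ∑ p : L × L, ∑ u : L, if p.1 * p.2 = u then (if x * u = x then a p.1 * b p.2 else 0) else 0 := Finset.sum_comm
    _ = ∑ p : L × L, if x * (p.1 * p.2) = x then a p.1 * b p.2 else 0 := by
        refine Finset.sum_congr rfl fun p _ => ?_
        rw [Finset.sum_ite_eq]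
        simp
    _ = ∑ p : L × L, if x * p.1 = x then (if x * p.2 = x then a p.1 * b p.2 else 0) else 0 := by
        refine Finset.sum_congr rfl fun p _ => ?_
        rw [key]
        by_cases h1 : x * p.1 = x <;> by_cases h2 : x * p.2 = x <;> simp [h1, h2]
    _ = ∑ s : L, ∑ u : L, (if x * s = x then a s else 0) * (if x * u = x then b u else 0) := by
        rw [Fintype.sum_prod_type]
        refine Finset.sum_congr rfl fun s _ => Finset.sum_congr rfl fun u _ => ?_
        by_cases h1 : x * s = x <;> by_cases h2 : x * u = x <;> simp [h1, h2]

lemma schutzRep_sub {L : Type*} [Mul L] [Fintype L] (a b : L → ℂ) (x : L) :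
    schutzRep (a - b) x = schutzRep a x - schutzRep b x := by
  simp only [schutzRep, Pi.sub_apply, ← Finset.sum_sub_distrib]
  refine Finset.sum_congr rfl fun u _ => ?_
  split_ifs <;> simp

lemma schutzRep_single {L : Type*} [Mul L] [Fintype L] (s x : L) :
    schutzRep (Pi.single s (1:ℂ)) x = if x * s = x then 1 else 0 := by
  classical
  simp only [schutzRep, Pi.single_apply]
  rw [Finset.sum_eq_single s]
  · simp
  · intro u _ hu; simp [hu]
  · simp

lemma schutzRep_foldr {L : Type*} [CommSemigroup L] [Fintype L]
    (hidem : ∀ s : L, s * s = s) (t : L) (l : List L) (init : L → ℂ) (x : L) :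
    schutzRep (l.foldr (fun y acc => semigroupConv ((Pi.single t 1 : L → ℂ) - Pi.single y 1) acc) init) x
      = (l.map (fun y => schutzRep ((Pi.single t 1 : L → ℂ) - Pi.single y 1) x)).prod
          * schutzRep init x := by
  induction l with
  | nil => simp
  | cons y l ih =>
      simp only [List.foldr_cons, List.map_cons, List.prod_cons, schutzRep_conv hidem, ih,
        mul_assoc]

/-- For a finite semilattice `L` with zero element `θ`, the Schützenberger
representation satisfies `Γ(ρ_t) = δ_t` for every `t ∈ L`. -/
theorem schutzRep_rho_eq_single {L : Type*} [CommSemigroup L] [Fintype L]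
    (hidem : ∀ s : L, s * s = s) (θ : L) (hθ : ∀ x : L, x * θ = θ ∧ θ * x = θ)
    (t : L) : schutzRep (rho t) = Pi.single t (1 : ℂ) := by
  classical
  funext x
  unfold rho
  rw [schutzRep_foldr hidem]
  have hmap : ((Finset.univ.filter (fun y : L => y * t = y ∧ y ≠ t)).toList.map
      (fun y => schutzRep ((Pi.single t 1 : L → ℂ) - Pi.single y 1) x)).prod
      = ∏ y ∈ Finset.univ.filter (fun y : L => y * t = y ∧ y ≠ t),
          ((if x * t = x then (1:ℂ) else 0) - (if x * y = x then (1:ℂ) else 0)) := by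
    rw [← Finset.prod_map_toList]
    congr 1
    refine List.map_congr_left (fun y _ => ?_)
    rw [schutzRep_sub, schutzRep_single, schutzRep_single]
  rw [hmap, schutzRep_single]
  by_cases hx : x = t
  · subst hx
    rw [if_pos (hidem x), Finset.prod_eq_one, one_mul, Pi.single_eq_same]
    intro y hy
    simp only [Finset.mem_filter, Finset.mem_univ, true_and] at hy
    have : x * y ≠ x := by
      rw [mul_comm, hy.1]; exact hy.2
    simp [this, hidem x]
  · rw [Pi.single_eq_of_ne hx]
    by_cases hxt : x * t = x
    · have hmem : x ∈ Finset.univ.filter (fun y : L => y * t = y ∧ y ≠ t) := by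
        simp [hxt, hx]
      rw [Finset.prod_eq_zero hmem, zero_mul]
      simp [hxt, hidem x]
    · simp [hxt]
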